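/- Let R be a relation on subdistributions such that Δ R Θ implies |Δ| ≥ |Θ|. Then the weak linear closure lc(R) of R is left-linear: for any finite families Δ_i lc(R) Θ_i and probabilities p_i, if ⊕_i p_i·Δ_i is a well-defined subdistribution (mass ≤ 1), then ⊕_i p_i·Θ_i is also well-defined and (⊕_i p_i·Δ_i) lc(R) (⊕_i p_i·Θ_i). -/

import Mathlib

open scoped BigOperators

/-- The mass of a subdistribution. -/
noncomputable def mass {S : Type*} (Δ : S → ℝ) : ℝ := ∑ᶠ s, Δ s

/-- A subdistribution over `S`. -/
def IsSubdist {S : Type*} (Δ : S → ℝ) : Prop :=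
  (Function.support Δ).Finite ∧ (∀ s, 0 ≤ Δ s ∧ Δ s ≤ 1) ∧ mass Δ ≤ 1

/-- The weak linear closure `lc(R)` of a relation on subdistributions: it relates
`⊕_i p_i·Δ_i` to `⊕_i p_i·Θ_i` whenever each `Δ_i R Θ_i` and both composite
subdistributions are defined (mass ≤ 1). -/
inductive LC {S : Type*} (R : (S → ℝ) → (S → ℝ) → Prop) :
    (S → ℝ) → (S → ℝ) → Prop where
  | comb (n : ℕ) (p : Fin n → ℝ) (Δi Θi : Fin n → S → ℝ) :
      (∀ i, 0 ≤ p i) → (∀ i, R (Δi i) (Θi i)) →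
      mass (fun s => ∑ i, p i * Δi i s) ≤ 1 →
      mass (fun s => ∑ i, p i * Θi i s) ≤ 1 →
      LC R (fun s => ∑ i, p i * Δi i s) (fun s => ∑ i, p i * Θi i s)


private lemma mass_comb {S : Type*} {m : ℕ} (c : Fin m → ℝ) (g : Fin m → S → ℝ)
    (hfin : ∀ j, (Function.support (g j)).Finite) :
    mass (fun s => ∑ j, c j * g j s) = ∑ j, c j * mass (g j) := by
  unfold mass
  rw [finsum_sum_comm _ _ (fun j _ => ((hfin j).subset
      (Function.support_mul_subset_right _ _)))]
  exact Finset.sum_congr rfl fun j _ => (mul_finsum (g j) (c j)).symm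

private lemma support_comb_finite {S : Type*} {m : ℕ} (c : Fin m → ℝ) (g : Fin m → S → ℝ)
    (h : ∀ j, (Function.support (g j)).Finite) :
    (Function.support (fun s => ∑ j, c j * g j s)).Finite := by
  have : (Function.support (fun s => ∑ j, c j * g j s)) ⊆
      ⋃ j, Function.support (g j) := by
    intro s hs
    simp only [Function.mem_support] at hs
    by_contra hc
    simp only [Set.mem_iUnion, Function.mem_support, not_exists, not_not] at hc
    exact hs (Finset.sum_eq_zero fun j _ => by rw [hc j, mul_zero])
  exact (Set.finite_iUnion h).subset this

private lemma LC_elim {S : Type*} {R : (S → ℝ) → (S → ℝ) → Prop} {Δ Θ : S → ℝ}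
    (h : LC R Δ Θ) :
    ∃ (m : ℕ) (q : Fin m → ℝ) (A B : Fin m → S → ℝ),
      (∀ j, 0 ≤ q j) ∧ (∀ j, R (A j) (B j)) ∧
      Δ = (fun s => ∑ j, q j * A j s) ∧ Θ = (fun s => ∑ j, q j * B j s) := by
  cases h with
  | comb m q A B hq hR _ _ => exact ⟨m, q, A, B, hq, hR, rfl, rfl⟩

/-- if `R` relates subdistributions and is mass non-increasing,
then the weak linear closure `lc(R)` is left-linear. -/
theorem lc_left_linear {S : Type*} (R : (S → ℝ) → (S → ℝ) → Prop)
    (hsub : ∀ Δ Θ, R Δ Θ → IsSubdist Δ ∧ IsSubdist Θ)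
    (hmass : ∀ Δ Θ, R Δ Θ → mass Θ ≤ mass Δ)
    (n : ℕ) (p : Fin n → ℝ) (Δi Θi : Fin n → S → ℝ)
    (hp : ∀ i, 0 ≤ p i) (hlc : ∀ i, LC R (Δi i) (Θi i))
    (hdef : mass (fun s => ∑ i, p i * Δi i s) ≤ 1) :
    mass (fun s => ∑ i, p i * Θi i s) ≤ 1 ∧
      LC R (fun s => ∑ i, p i * Δi i s) (fun s => ∑ i, p i * Θi i s) := by
  choose m q A B hq hR hΔ hΘ using fun i => LC_elim (hlc i)
  -- finite supports
  have hAfin : ∀ i j, (Function.support (A i j)).Finite :=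
    fun i j => (hsub _ _ (hR i j)).1.1
  have hBfin : ∀ i j, (Function.support (B i j)).Finite :=
    fun i j => (hsub _ _ (hR i j)).2.1
  have hΔfin : ∀ i, (Function.support (Δi i)).Finite := by
    intro i; rw [hΔ i]; exact support_comb_finite _ _ (hAfin i)
  have hΘfin : ∀ i, (Function.support (Θi i)).Finite := by
    intro i; rw [hΘ i]; exact support_comb_finite _ _ (hBfin i)
  have hmassΘΔ : ∀ i, mass (Θi i) ≤ mass (Δi i) := by
    intro i
    rw [hΔ i, hΘ i, mass_comb _ _ (hAfin i), mass_comb _ _ (hBfin i)]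
    exact Finset.sum_le_sum fun j _ =>
      mul_le_mul_of_nonneg_left (hmass _ _ (hR i j)) (hq i j)
  have hΘmass : mass (fun s => ∑ i, p i * Θi i s) ≤ 1 := by
    calc mass (fun s => ∑ i, p i * Θi i s) = ∑ i, p i * mass (Θi i) :=
          mass_comb p Θi hΘfin
      _ ≤ ∑ i, p i * mass (Δi i) :=
          Finset.sum_le_sum fun i _ => mul_le_mul_of_nonneg_left (hmassΘΔ i) (hp i)
      _ = mass (fun s => ∑ i, p i * Δi i s) := (mass_comb p Δi hΔfin).symm
      _ ≤ 1 := hdef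
  refine ⟨hΘmass, ?_⟩
  -- flatten the double sum
  classical
  set σ := (i : Fin n) × Fin (m i) with hσ
  let e : Fin (Fintype.card σ) ≃ σ := (Fintype.equivFin σ).symm
  let P : Fin (Fintype.card σ) → ℝ := fun k => p (e k).1 * q (e k).1 (e k).2
  let A' : Fin (Fintype.card σ) → S → ℝ := fun k => A (e k).1 (e k).2
  let B' : Fin (Fintype.card σ) → S → ℝ := fun k => B (e k).1 (e k).2
  have hflΔ : (fun s => ∑ i, p i * Δi i s) = (fun s => ∑ k, P k * A' k s) := by
    funext s
    calc ∑ i, p i * Δi i s = ∑ i, ∑ j, (p i * q i j) * A i j s := by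
          refine Finset.sum_congr rfl fun i _ => ?_
          rw [hΔ i, Finset.mul_sum]
          exact Finset.sum_congr rfl fun j _ => (mul_assoc _ _ _).symm
      _ = ∑ x : σ, (p x.1 * q x.1 x.2) * A x.1 x.2 s := by rw [← Finset.univ_sigma_univ, Finset.sum_sigma]
      _ = ∑ k, P k * A' k s := (Equiv.sum_comp e _).symm
  have hflΘ : (fun s => ∑ i, p i * Θi i s) = (fun s => ∑ k, P k * B' k s) := by
    funext s
    calc ∑ i, p i * Θi i s = ∑ i, ∑ j, (p i * q i j) * B i j s := by
          refine Finset.sum_congr rfl fun i _ => ?_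
          rw [hΘ i, Finset.mul_sum]
          exact Finset.sum_congr rfl fun j _ => (mul_assoc _ _ _).symm
      _ = ∑ x : σ, (p x.1 * q x.1 x.2) * B x.1 x.2 s := by rw [← Finset.univ_sigma_univ, Finset.sum_sigma]
      _ = ∑ k, P k * B' k s := (Equiv.sum_comp e _).symm
  rw [hflΔ, hflΘ]
  exact LC.comb _ P A' B' (fun k => mul_nonneg (hp _) (hq _ _))
    (fun k => hR _ _) (hflΔ ▸ hdef) (hflΘ ▸ hΘmass)
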